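/- ‖σ·E[z] − Σ_i u_i r^(i)‖ ≤ 2εr, where E[z] = Σ_{i∈G} p_i r^(i)/(u_i σ), G is the set of good rows, p_i = (σ^2 u_i^2 + r_i^2)/(σ^2 + r^2). -/

import Mathlib

set_option maxHeartbeats 1000000


/-- `‖σ·E[z] − ∑ u_i r^(i)‖ ≤ 2εr`, where `E[z] = ∑_{i∈G} p_i r^(i)/(u_i σ)`,
`G` the set of good rows and `p_i` the length-squared sampling probabilities. -/
theorem stmt5 {E : Type*} [NormedAddCommGroup E] [InnerProductSpace ℝ E]
    (n : ℕ) (ε σ : ℝ) (u : Fin n → ℝ) (rv : Fin n → E)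
    (hε0 : 0 < ε) (hε1 : ε < 1) (hσ : 0 < σ)
    (hu : ∑ i, u i ^ 2 = 1)
    (hR : ∑ i, ‖rv i‖ ^ 2 ≤ ε ^ 3 * σ ^ 2) :
    ‖σ • (∑ i ∈ Finset.univ.filter (fun i => ‖rv i‖ ^ 2 < ε * σ ^ 2 * u i ^ 2),
            ((σ ^ 2 * u i ^ 2 + ‖rv i‖ ^ 2) / (σ ^ 2 + ∑ k, ‖rv k‖ ^ 2) / (u i * σ)) • rv i)
        - ∑ i, u i • rv i‖
      ≤ 2 * ε * Real.sqrt (∑ i, ‖rv i‖ ^ 2) := by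
  set R : ℝ := ∑ i, ‖rv i‖ ^ 2 with hRdef
  have hR0 : 0 ≤ R := Finset.sum_nonneg fun i _ => by positivity
  set r : ℝ := Real.sqrt R with hrdef
  have hr0 : 0 ≤ r := Real.sqrt_nonneg _
  have hrr : r * r = R := Real.mul_self_sqrt hR0
  have hD : (0:ℝ) < σ^2 + R := by positivity
  have hse0 : 0 < Real.sqrt ε := Real.sqrt_pos.mpr hε0
  have hεs : Real.sqrt ε * Real.sqrt ε = ε := Real.mul_self_sqrt hε0.le
  have hrle : r ≤ ε * Real.sqrt ε * σ := by
    have h1 : ε ^ 3 * σ ^ 2 = (ε * Real.sqrt ε * σ)^2 := by ring_nf; nlinarith [hεs]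
    have := Real.sqrt_le_sqrt (hR.trans_eq h1)
    rwa [Real.sqrt_sq (by positivity)] at this
  clear_value R
  clear_value r
  set G := Finset.univ.filter (fun i => ‖rv i‖ ^ 2 < ε * σ ^ 2 * u i ^ 2) with hG
  set B := Finset.univ.filter (fun i => ¬ (‖rv i‖ ^ 2 < ε * σ ^ 2 * u i ^ 2)) with hB
  set c : Fin n → ℝ := fun i => (σ ^ 2 * u i ^ 2 + ‖rv i‖ ^ 2) / (σ ^ 2 + R) / (u i * σ) with hc
  have key : σ • (∑ i ∈ G, c i • rv i) - ∑ i, u i • rv i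
      = (∑ i ∈ G, (σ * c i - u i) • rv i) - ∑ i ∈ B, u i • rv i := by
    rw [Finset.smul_sum,
      ← Finset.sum_filter_add_sum_filter_not Finset.univ
        (fun i => ‖rv i‖ ^ 2 < ε * σ ^ 2 * u i ^ 2) (fun i => u i • rv i)]
    simp only [smul_smul, sub_smul, Finset.sum_sub_distrib]
    abel
  rw [key]
  have tri : ‖(∑ i ∈ G, (σ * c i - u i) • rv i) - ∑ i ∈ B, u i • rv i‖
      ≤ (∑ i ∈ G, |σ * c i - u i| * ‖rv i‖) + ∑ i ∈ B, |u i| * ‖rv i‖ := by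
    refine (norm_sub_le _ _).trans (add_le_add ?_ ?_) <;>
      refine (norm_sum_le _ _).trans (le_of_eq (Finset.sum_congr rfl fun i _ => ?_)) <;>
      rw [norm_smul, Real.norm_eq_abs]
  refine tri.trans ?_
  -- per-term bounds
  have good_bound : ∀ i ∈ G, |σ * c i - u i| * ‖rv i‖
      ≤ Real.sqrt ε * ‖rv i‖^2 / σ + |u i| * ‖rv i‖ * R / σ^2 := by
    intro i hi
    have hgi : ‖rv i‖ ^ 2 < ε * σ ^ 2 * u i ^ 2 := by
      have := (Finset.mem_filter.mp hi).2; exact this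
    have hui : u i ≠ 0 := by
      intro h
      rw [h] at hgi
      nlinarith [sq_nonneg ‖rv i‖]
    have hau : 0 < |u i| := abs_pos.mpr hui
    have ha0 : 0 ≤ ‖rv i‖ := norm_nonneg _
    have halt : ‖rv i‖ < Real.sqrt ε * σ * |u i| := by
      refine lt_of_pow_lt_pow_left₀ 2 (by positivity) ?_
      calc ‖rv i‖ ^ 2 < ε * σ ^ 2 * u i ^ 2 := hgi
        _ = (Real.sqrt ε * σ * |u i|) ^ 2 := by rw [mul_pow, mul_pow, sq_abs]; nlinarith [hεs]
    have h1 : σ * c i - u i = (‖rv i‖^2 - u i^2 * R) / ((σ^2 + R) * u i) := by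
      rw [hc]; field_simp; ring
    have h2 : |σ * c i - u i| ≤ (‖rv i‖^2 + u i^2 * R) / (σ^2 * |u i|) := by
      rw [h1, abs_div, abs_mul, abs_of_pos hD]
      apply div_le_div₀ (by positivity)
      · exact (abs_sub _ _).trans (by rw [abs_of_nonneg (by positivity), abs_of_nonneg (by positivity)])
      · positivity
      · nlinarith [sq_nonneg σ, hau]
    calc |σ * c i - u i| * ‖rv i‖ ≤ (‖rv i‖^2 + u i^2 * R) / (σ^2 * |u i|) * ‖rv i‖ :=
          mul_le_mul_of_nonneg_right h2 ha0
      _ = ‖rv i‖^2 * ‖rv i‖ / (σ^2 * |u i|) + |u i| * ‖rv i‖ * R / σ^2 := by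
          field_simp
          linear_combination (-(‖rv i‖ * R)) * sq_abs (u i)
      _ ≤ Real.sqrt ε * ‖rv i‖^2 / σ + |u i| * ‖rv i‖ * R / σ^2 := by
          gcongr ?_ + _
          rw [div_le_div_iff₀ (by positivity) hσ]
          nlinarith [mul_le_mul_of_nonneg_left halt.le (mul_nonneg (sq_nonneg ‖rv i‖) hσ.le)]
  have bad_bound : ∀ i ∈ B, |u i| * ‖rv i‖ ≤ ‖rv i‖^2 / (Real.sqrt ε * σ) := by
    intro i hi
    have hbi : ε * σ ^ 2 * u i ^ 2 ≤ ‖rv i‖ ^ 2 := by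
      have := (Finset.mem_filter.mp hi).2; linarith [not_lt.mp this]
    have hle : Real.sqrt ε * σ * |u i| ≤ ‖rv i‖ := by
      refine le_of_pow_le_pow_left₀ two_ne_zero (norm_nonneg _) ?_
      calc (Real.sqrt ε * σ * |u i|) ^ 2 = ε * σ ^ 2 * u i ^ 2 := by
            rw [mul_pow, mul_pow, sq_abs]; nlinarith [hεs]
        _ ≤ ‖rv i‖ ^ 2 := hbi
    rw [le_div_iff₀ (by positivity)]
    nlinarith [norm_nonneg (rv i)]
  have S0 : 0 ≤ ∑ i, |u i| * ‖rv i‖ :=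
    Finset.sum_nonneg fun i _ => mul_nonneg (abs_nonneg _) (norm_nonneg _)
  have S_le : ∑ i, |u i| * ‖rv i‖ ≤ r := by
    have hcs := Finset.sum_mul_sq_le_sq_mul_sq Finset.univ (fun i => |u i|) (fun i => ‖rv i‖)
    simp only [sq_abs] at hcs
    rw [hu, one_mul] at hcs
    nlinarith [hrr, hr0]
  -- assemble
  have hGB : (∑ i ∈ G, ‖rv i‖^2) + ∑ i ∈ B, ‖rv i‖^2 = R := by
    rw [hRdef]
    exact Finset.sum_filter_add_sum_filter_not Finset.univ _ _
  have hG0 : 0 ≤ ∑ i ∈ G, ‖rv i‖^2 := Finset.sum_nonneg fun i _ => by positivity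
  have hB0 : 0 ≤ ∑ i ∈ B, ‖rv i‖^2 := Finset.sum_nonneg fun i _ => by positivity
  have hSG : ∑ i ∈ G, |u i| * ‖rv i‖ ≤ r := by
    refine le_trans (Finset.sum_le_sum_of_subset_of_nonneg (Finset.filter_subset _ _)
      (fun i _ _ => mul_nonneg (abs_nonneg _) (norm_nonneg _))) S_le
  have goodsum : ∑ i ∈ G, |σ * c i - u i| * ‖rv i‖
      ≤ (∑ i ∈ G, Real.sqrt ε * ‖rv i‖^2 / σ) + (∑ i ∈ G, |u i| * ‖rv i‖) * R / σ^2 := by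
    refine le_trans (Finset.sum_le_sum good_bound) (le_of_eq ?_)
    rw [Finset.sum_add_distrib]
    congr 1
    rw [← Finset.sum_div, ← Finset.sum_mul]
  have badsum : ∑ i ∈ B, |u i| * ‖rv i‖ ≤ (∑ i ∈ B, ‖rv i‖^2) / (Real.sqrt ε * σ) := by
    refine le_trans (Finset.sum_le_sum bad_bound) (le_of_eq ?_)
    rw [Finset.sum_div]
  have key1 : (∑ i ∈ G, Real.sqrt ε * ‖rv i‖^2 / σ) + (∑ i ∈ B, ‖rv i‖^2) / (Real.sqrt ε * σ)
      ≤ ε * r := by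
    have h1 : ∑ i ∈ G, Real.sqrt ε * ‖rv i‖^2 / σ = (ε * ∑ i ∈ G, ‖rv i‖^2) / (Real.sqrt ε * σ) := by
      rw [← Finset.sum_div, ← Finset.mul_sum]
      rw [div_eq_div_iff hσ.ne' (by positivity)]
      linear_combination (σ * ∑ i ∈ G, ‖rv i‖^2) * hεs
    rw [h1, ← add_div, div_le_iff₀ (by positivity)]
    have h2 : ε * (∑ i ∈ G, ‖rv i‖^2) + ∑ i ∈ B, ‖rv i‖^2 ≤ R := by nlinarith
    refine h2.trans ?_
    calc R = r * r := hrr.symm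
      _ ≤ r * (ε * Real.sqrt ε * σ) := mul_le_mul_of_nonneg_left hrle hr0
      _ = ε * r * (Real.sqrt ε * σ) := by ring
  have key2 : (∑ i ∈ G, |u i| * ‖rv i‖) * R / σ^2 ≤ ε * r := by
    have hε3 : ε^3 ≤ ε := by
      nlinarith [mul_pos (mul_pos hε0 hε0) (sub_pos.mpr hε1), mul_pos hε0 (sub_pos.mpr hε1)]
    have hRs : R / σ^2 ≤ ε := by
      rw [div_le_iff₀ (by positivity)]
      nlinarith [hR, hε3, sq_nonneg σ]
    calc (∑ i ∈ G, |u i| * ‖rv i‖) * R / σ^2 = (∑ i ∈ G, |u i| * ‖rv i‖) * (R / σ^2) := by ring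
      _ ≤ r * ε := mul_le_mul hSG hRs (by positivity) hr0
      _ = ε * r := by ring
  calc (∑ i ∈ G, |σ * c i - u i| * ‖rv i‖) + ∑ i ∈ B, |u i| * ‖rv i‖
      ≤ ((∑ i ∈ G, Real.sqrt ε * ‖rv i‖^2 / σ) + (∑ i ∈ G, |u i| * ‖rv i‖) * R / σ^2)
        + (∑ i ∈ B, ‖rv i‖^2) / (Real.sqrt ε * σ) := add_le_add goodsum badsum
    _ = ((∑ i ∈ G, Real.sqrt ε * ‖rv i‖^2 / σ) + (∑ i ∈ B, ‖rv i‖^2) / (Real.sqrt ε * σ))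
        + (∑ i ∈ G, |u i| * ‖rv i‖) * R / σ^2 := by ring
    _ ≤ ε * r + ε * r := add_le_add key1 key2
    _ = 2 * ε * r := by ring
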